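/- Let B = {a₁, ..., a₈} be affinely independent in (Z/2Z)^n and let x₁ = a₁+a₂+a₃+a₄+a₅, x₂ = a₃+a₄+a₅+a₆+a₇, x₃ = a₁+a₂+a₃+a₇+a₈. Then C = B ∪ {x₁, x₂, x₃} is a cap of size 11. -/

import Mathlib

/-- A cap: a subset of (Z/2Z)^n containing no quad (four distinct vectors summing to zero). -/
def IsCap {n : ℕ} (C : Set (Fin n → ZMod 2)) : Prop :=
  ∀ a ∈ C, ∀ b ∈ C, ∀ c ∈ C, ∀ d ∈ C,
    a ≠ b → a ≠ c → a ≠ d → b ≠ c → b ≠ d → c ≠ d → a + b + c + d ≠ 0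

/-- Affine independence: no element is the sum of an odd number of other elements. -/
def AffIndep {n : ℕ} (B : Finset (Fin n → ZMod 2)) : Prop :=
  ∀ b ∈ B, ∀ T ⊆ B.erase b, Odd T.card → b ≠ ∑ v ∈ T, v

private def cv : Fin 11 → Fin 8 → ZMod 2 :=
  ![![1,0,0,0,0,0,0,0], ![0,1,0,0,0,0,0,0], ![0,0,1,0,0,0,0,0], ![0,0,0,1,0,0,0,0],
    ![0,0,0,0,1,0,0,0], ![0,0,0,0,0,1,0,0], ![0,0,0,0,0,0,1,0], ![0,0,0,0,0,0,0,1],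
    ![1,1,1,1,1,0,0,0], ![0,0,1,1,1,1,1,0], ![1,1,1,0,0,0,1,1]]

private lemma zmod2_cases : ∀ x : ZMod 2, x = 0 ∨ x = 1 := by decide

private lemma zmod2_add_eq_zero : ∀ x y : ZMod 2, x + y = 0 → x = y := by decide

private lemma fun_add_eq_zero {n : ℕ} (x y : Fin n → ZMod 2) (h : x + y = 0) : x = y := by
  funext i; exact zmod2_add_eq_zero _ _ (congrFun h i)

private lemma fun_self_add {n : ℕ} (x : Fin n → ZMod 2) : x + x = 0 := by
  funext i; exact (by decide : ∀ y : ZMod 2, y + y = 0) (x i)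

private lemma cv_sum : ∀ k, ∑ i, cv k i = 1 := by decide

set_option maxHeartbeats 1000000 in
private lemma cv_pair : ∀ k l : Fin 11, k ≠ l → (fun i => cv k i + cv l i) ≠ 0 := by decide

set_option maxHeartbeats 8000000 in
private lemma cv_quad : ∀ k l m p : Fin 11, k ≠ l → k ≠ m → k ≠ p → l ≠ m → l ≠ p → m ≠ p →
    (fun i => cv k i + cv l i + cv m i + cv p i) ≠ 0 := by decide

private lemma key {n : ℕ} (a : Fin 8 → (Fin n → ZMod 2)) (ha : Function.Injective a)
    (hB : AffIndep (Finset.image a Finset.univ))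
    (c : Fin 8 → ZMod 2) (hc : c ≠ 0) (hpar : ∑ i, c i = 0) :
    ∑ i, c i • a i ≠ 0 := by
  classical
  set S := Finset.univ.filter (fun i => c i = 1) with hS
  have hsum : ∑ i, c i • a i = ∑ i ∈ S, a i := by
    rw [hS, Finset.sum_filter]
    refine Finset.sum_congr rfl fun i _ => ?_
    rcases zmod2_cases (c i) with h | h <;> simp [h]
  have hcardz : (S.card : ZMod 2) = 0 := by
    calc (S.card : ZMod 2) = ∑ _i ∈ S, (1 : ZMod 2) := by simp
      _ = ∑ i, if c i = 1 then (1 : ZMod 2) else 0 := Finset.sum_filter _ _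
      _ = ∑ i, c i := Finset.sum_congr rfl fun i _ => by
          rcases zmod2_cases (c i) with h | h <;> simp [h]
      _ = 0 := hpar
  have heven : 2 ∣ S.card := by
    rwa [ZMod.natCast_eq_zero_iff] at hcardz
  have hne : S.Nonempty := by
    rcases Function.ne_iff.mp hc with ⟨i, hi⟩
    refine ⟨i, ?_⟩
    rw [hS, Finset.mem_filter]
    rcases zmod2_cases (c i) with h | h
    · exact absurd h hi
    · exact ⟨Finset.mem_univ _, h⟩
  obtain ⟨b', hb'⟩ := hne
  set T := (S.erase b').image a with hT
  have hTsub : T ⊆ (Finset.image a Finset.univ).erase (a b') := by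
    intro x hx
    rw [hT, Finset.mem_image] at hx
    obtain ⟨i, hi, rfl⟩ := hx
    refine Finset.mem_erase.mpr ⟨?_, Finset.mem_image.mpr ⟨i, Finset.mem_univ _, rfl⟩⟩
    exact fun h => (Finset.mem_erase.mp hi).1 (ha h)
  have h1 : 1 ≤ S.card := Finset.card_pos.mpr ⟨b', hb'⟩
  have hTcard : T.card = S.card - 1 := by
    rw [hT, Finset.card_image_of_injective _ ha, Finset.card_erase_of_mem hb']
  have hodd : Odd T.card := by
    rw [hTcard, Nat.odd_iff]; omega
  have hne' := hB (a b') (Finset.mem_image.mpr ⟨b', Finset.mem_univ _, rfl⟩) T hTsub hodd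
  intro h0
  apply hne'
  have hTs : ∑ v ∈ T, v = ∑ i ∈ S.erase b', a i := by
    rw [hT]; exact Finset.sum_image fun x _ y _ h => ha h
  rw [hTs]
  apply fun_add_eq_zero _ _
  rwa [Finset.add_sum_erase _ _ hb', ← hsum]

set_option maxHeartbeats 1000000 in
theorem cap11_555_332 {n : ℕ} (a : Fin 8 → (Fin n → ZMod 2))
    (ha : Function.Injective a)
    (hB : AffIndep (Finset.image a Finset.univ)) :
    IsCap (↑(Finset.image a Finset.univ ∪
        {a 0 + a 1 + a 2 + a 3 + a 4,
         a 2 + a 3 + a 4 + a 5 + a 6,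
         a 0 + a 1 + a 2 + a 6 + a 7}) : Set (Fin n → ZMod 2)) ∧
    (Finset.image a Finset.univ ∪
        {a 0 + a 1 + a 2 + a 3 + a 4,
         a 2 + a 3 + a 4 + a 5 + a 6,
         a 0 + a 1 + a 2 + a 6 + a 7}).card = 11 := by
  classical
  set e : Fin 11 → (Fin n → ZMod 2) := fun k => ∑ i, cv k i • a i with he
  have esum : ∀ c d : Fin 8 → ZMod 2,
      (∑ i, c i • a i) + (∑ i, d i • a i) = ∑ i, (c i + d i) • a i := by
    intro c d
    rw [← Finset.sum_add_distrib]
    exact Finset.sum_congr rfl fun i _ => (add_smul _ _ _).symm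
  have epair : ∀ k l : Fin 11, e k + e l = ∑ i, (cv k i + cv l i) • a i := fun k l => esum _ _
  have cpar : ∀ k l : Fin 11, ∑ i, (cv k i + cv l i) = 0 := by
    intro k l
    rw [Finset.sum_add_distrib, cv_sum, cv_sum]; decide
  have einj : Function.Injective e := by
    intro k l h
    by_contra hkl
    have h0 : ∑ i, (cv k i + cv l i) • a i = 0 := by
      rw [← epair, h, fun_self_add]
    exact key a ha hB _ (cv_pair k l hkl) (cpar k l) h0
  -- values of e
  have he0 : e 0 = a 0 := by
    rw [he]
    show ∑ i, cv 0 i • a i = a 0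
    rw [Fin.sum_univ_eight]
    rw [show (cv 0 0 : ZMod 2) = 1 from by decide, show (cv 0 1 : ZMod 2) = 0 from by decide, show (cv 0 2 : ZMod 2) = 0 from by decide, show (cv 0 3 : ZMod 2) = 0 from by decide, show (cv 0 4 : ZMod 2) = 0 from by decide, show (cv 0 5 : ZMod 2) = 0 from by decide, show (cv 0 6 : ZMod 2) = 0 from by decide, show (cv 0 7 : ZMod 2) = 0 from by decide]
    simp
  have he1 : e 1 = a 1 := by
    rw [he]
    show ∑ i, cv 1 i • a i = a 1
    rw [Fin.sum_univ_eight]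
    rw [show (cv 1 0 : ZMod 2) = 0 from by decide, show (cv 1 1 : ZMod 2) = 1 from by decide, show (cv 1 2 : ZMod 2) = 0 from by decide, show (cv 1 3 : ZMod 2) = 0 from by decide, show (cv 1 4 : ZMod 2) = 0 from by decide, show (cv 1 5 : ZMod 2) = 0 from by decide, show (cv 1 6 : ZMod 2) = 0 from by decide, show (cv 1 7 : ZMod 2) = 0 from by decide]
    simp
  have he2 : e 2 = a 2 := by
    rw [he]
    show ∑ i, cv 2 i • a i = a 2
    rw [Fin.sum_univ_eight]
    rw [show (cv 2 0 : ZMod 2) = 0 from by decide, show (cv 2 1 : ZMod 2) = 0 from by decide, show (cv 2 2 : ZMod 2) = 1 from by decide, show (cv 2 3 : ZMod 2) = 0 from by decide, show (cv 2 4 : ZMod 2) = 0 from by decide, show (cv 2 5 : ZMod 2) = 0 from by decide, show (cv 2 6 : ZMod 2) = 0 from by decide, show (cv 2 7 : ZMod 2) = 0 from by decide]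
    simp
  have he3 : e 3 = a 3 := by
    rw [he]
    show ∑ i, cv 3 i • a i = a 3
    rw [Fin.sum_univ_eight]
    rw [show (cv 3 0 : ZMod 2) = 0 from by decide, show (cv 3 1 : ZMod 2) = 0 from by decide, show (cv 3 2 : ZMod 2) = 0 from by decide, show (cv 3 3 : ZMod 2) = 1 from by decide, show (cv 3 4 : ZMod 2) = 0 from by decide, show (cv 3 5 : ZMod 2) = 0 from by decide, show (cv 3 6 : ZMod 2) = 0 from by decide, show (cv 3 7 : ZMod 2) = 0 from by decide]
    simp
  have he4 : e 4 = a 4 := by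
    rw [he]
    show ∑ i, cv 4 i • a i = a 4
    rw [Fin.sum_univ_eight]
    rw [show (cv 4 0 : ZMod 2) = 0 from by decide, show (cv 4 1 : ZMod 2) = 0 from by decide, show (cv 4 2 : ZMod 2) = 0 from by decide, show (cv 4 3 : ZMod 2) = 0 from by decide, show (cv 4 4 : ZMod 2) = 1 from by decide, show (cv 4 5 : ZMod 2) = 0 from by decide, show (cv 4 6 : ZMod 2) = 0 from by decide, show (cv 4 7 : ZMod 2) = 0 from by decide]
    simp
  have he5 : e 5 = a 5 := by
    rw [he]
    show ∑ i, cv 5 i • a i = a 5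
    rw [Fin.sum_univ_eight]
    rw [show (cv 5 0 : ZMod 2) = 0 from by decide, show (cv 5 1 : ZMod 2) = 0 from by decide, show (cv 5 2 : ZMod 2) = 0 from by decide, show (cv 5 3 : ZMod 2) = 0 from by decide, show (cv 5 4 : ZMod 2) = 0 from by decide, show (cv 5 5 : ZMod 2) = 1 from by decide, show (cv 5 6 : ZMod 2) = 0 from by decide, show (cv 5 7 : ZMod 2) = 0 from by decide]
    simp
  have he6 : e 6 = a 6 := by
    rw [he]
    show ∑ i, cv 6 i • a i = a 6
    rw [Fin.sum_univ_eight]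
    rw [show (cv 6 0 : ZMod 2) = 0 from by decide, show (cv 6 1 : ZMod 2) = 0 from by decide, show (cv 6 2 : ZMod 2) = 0 from by decide, show (cv 6 3 : ZMod 2) = 0 from by decide, show (cv 6 4 : ZMod 2) = 0 from by decide, show (cv 6 5 : ZMod 2) = 0 from by decide, show (cv 6 6 : ZMod 2) = 1 from by decide, show (cv 6 7 : ZMod 2) = 0 from by decide]
    simp
  have he7 : e 7 = a 7 := by
    rw [he]
    show ∑ i, cv 7 i • a i = a 7
    rw [Fin.sum_univ_eight]
    rw [show (cv 7 0 : ZMod 2) = 0 from by decide, show (cv 7 1 : ZMod 2) = 0 from by decide, show (cv 7 2 : ZMod 2) = 0 from by decide, show (cv 7 3 : ZMod 2) = 0 from by decide, show (cv 7 4 : ZMod 2) = 0 from by decide, show (cv 7 5 : ZMod 2) = 0 from by decide, show (cv 7 6 : ZMod 2) = 0 from by decide, show (cv 7 7 : ZMod 2) = 1 from by decide]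
    simp
  have he8 : e 8 = a 0 + a 1 + a 2 + a 3 + a 4 := by
    rw [he]
    show ∑ i, cv 8 i • a i = a 0 + a 1 + a 2 + a 3 + a 4
    rw [Fin.sum_univ_eight]
    rw [show (cv 8 0 : ZMod 2) = 1 from by decide, show (cv 8 1 : ZMod 2) = 1 from by decide, show (cv 8 2 : ZMod 2) = 1 from by decide, show (cv 8 3 : ZMod 2) = 1 from by decide, show (cv 8 4 : ZMod 2) = 1 from by decide, show (cv 8 5 : ZMod 2) = 0 from by decide, show (cv 8 6 : ZMod 2) = 0 from by decide, show (cv 8 7 : ZMod 2) = 0 from by decide]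
    simp
  have he9 : e 9 = a 2 + a 3 + a 4 + a 5 + a 6 := by
    rw [he]
    show ∑ i, cv 9 i • a i = a 2 + a 3 + a 4 + a 5 + a 6
    rw [Fin.sum_univ_eight]
    rw [show (cv 9 0 : ZMod 2) = 0 from by decide, show (cv 9 1 : ZMod 2) = 0 from by decide, show (cv 9 2 : ZMod 2) = 1 from by decide, show (cv 9 3 : ZMod 2) = 1 from by decide, show (cv 9 4 : ZMod 2) = 1 from by decide, show (cv 9 5 : ZMod 2) = 1 from by decide, show (cv 9 6 : ZMod 2) = 1 from by decide, show (cv 9 7 : ZMod 2) = 0 from by decide]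
    simp
  have he10 : e 10 = a 0 + a 1 + a 2 + a 6 + a 7 := by
    rw [he]
    show ∑ i, cv 10 i • a i = a 0 + a 1 + a 2 + a 6 + a 7
    rw [Fin.sum_univ_eight]
    rw [show (cv 10 0 : ZMod 2) = 1 from by decide, show (cv 10 1 : ZMod 2) = 1 from by decide, show (cv 10 2 : ZMod 2) = 1 from by decide, show (cv 10 3 : ZMod 2) = 0 from by decide, show (cv 10 4 : ZMod 2) = 0 from by decide, show (cv 10 5 : ZMod 2) = 0 from by decide, show (cv 10 6 : ZMod 2) = 1 from by decide, show (cv 10 7 : ZMod 2) = 1 from by decide]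
    simp
  have huniv8 : (Finset.univ : Finset (Fin 8)) = {0,1,2,3,4,5,6,7} := by decide
  have huniv11 : (Finset.univ : Finset (Fin 11)) = {0,1,2,3,4,5,6,7,8,9,10} := by decide
  have hU : Finset.image a Finset.univ ∪
      {a 0 + a 1 + a 2 + a 3 + a 4,
       a 2 + a 3 + a 4 + a 5 + a 6,
       a 0 + a 1 + a 2 + a 6 + a 7} = Finset.image e Finset.univ := by
    rw [huniv8, huniv11]
    simp only [Finset.image_insert, Finset.image_singleton,
      he0, he1, he2, he3, he4, he5, he6, he7, he8, he9, he10]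
    ext x
    simp only [Finset.mem_union, Finset.mem_insert, Finset.mem_singleton, or_assoc]
  have quad : ∀ k l m p : Fin 11, k ≠ l → k ≠ m → k ≠ p → l ≠ m → l ≠ p → m ≠ p →
      e k + e l + e m + e p ≠ 0 := by
    intro k l m p h1 h2 h3 h4 h5 h6
    have hsum : e k + e l + e m + e p = ∑ i, (cv k i + cv l i + cv m i + cv p i) • a i := by
      rw [he]
      rw [esum, esum, esum]
    rw [hsum]
    apply key a ha hB _ (cv_quad k l m p h1 h2 h3 h4 h5 h6)
    rw [Finset.sum_add_distrib, Finset.sum_add_distrib, Finset.sum_add_distrib,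
      cv_sum, cv_sum, cv_sum, cv_sum]
    decide
  constructor
  · rw [hU]
    intro w hw x hx y hy z hz hwx hwy hwz hxy hxz hyz
    rw [Finset.coe_image, Set.mem_image] at hw hx hy hz
    obtain ⟨k1, _, rfl⟩ := hw
    obtain ⟨k2, _, rfl⟩ := hx
    obtain ⟨k3, _, rfl⟩ := hy
    obtain ⟨k4, _, rfl⟩ := hz
    exact quad k1 k2 k3 k4 (fun h => hwx (congrArg e h)) (fun h => hwy (congrArg e h))
      (fun h => hwz (congrArg e h)) (fun h => hxy (congrArg e h))
      (fun h => hxz (congrArg e h)) (fun h => hyz (congrArg e h))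
  · rw [hU, Finset.card_image_of_injective _ einj]
    simp
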